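/- arXiv:2510.15529 — 2 statements merged into one kernel-verified Lean document; each statement's English description precedes it below -/
import Mathlib

section
/- For every integer d ≥ 1 and every l with 0 ≤ l ≤ d−1, the quantity ρ_l = 2(2(d−l)−1)(2d(d+1)^{l+1} − 2(d−l) + 1) / (d(d+1)^{l+1}) is maximized at l = 0, and ρ_0 = 2(2d−1)(2d²+1)/(d(d+1)) < 8d. -/
/-- The congestion `ρ_l` of an edge from layer `l` to layer `l+1` is maximised
at `l = 0`, where it equals `2(2d-1)(2d²+1)/(d(d+1)) < 8d`. -/
theorem stmt_4 (d : ℕ) (hd : 1 ≤ d) (ρ : ℕ → ℝ)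
    (hρ : ∀ l : ℕ, ρ l =
      2 * (2 * ((d : ℝ) - l) - 1) * (2 * d * ((d : ℝ) + 1) ^ (l + 1) - 2 * ((d : ℝ) - l) + 1)
        / ((d : ℝ) * ((d : ℝ) + 1) ^ (l + 1))) :
    (∀ l : ℕ, l ≤ d - 1 → ρ l ≤ ρ 0) ∧
    ρ 0 = 2 * (2 * (d : ℝ) - 1) * (2 * (d : ℝ) ^ 2 + 1) / ((d : ℝ) * ((d : ℝ) + 1)) ∧
    ρ 0 < 8 * d := by
  have ha : (1:ℝ) ≤ (d:ℝ) := by exact_mod_cast hd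
  refine ⟨?_, ?_, ?_⟩
  · intro l hl
    rcases Nat.eq_zero_or_pos l with rfl | hlpos
    · exact le_refl _
    · have hl1 : (1:ℝ) ≤ (l:ℝ) := by exact_mod_cast hlpos
      have hld : (l:ℝ) + 1 ≤ (d:ℝ) := by
        have : l + 1 ≤ d := by omega
        exact_mod_cast this
      have hX : ((d:ℝ)+1)^2 ≤ ((d:ℝ)+1)^(l+1) := by
        apply pow_le_pow_right₀ (by linarith) (by omega)
      have hXpos : (0:ℝ) < ((d:ℝ)+1)^(l+1) := by positivity
      rw [hρ, hρ]
      rw [div_le_div_iff₀ (by positivity) (by positivity)]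
      push_cast
      nlinarith [mul_nonneg (mul_nonneg (by linarith : (0:ℝ) ≤ 2*((d:ℝ)-l)-1)
          (by linarith : (0:ℝ) ≤ 2*((d:ℝ)-l)-1)) (by linarith : (0:ℝ) ≤ (d:ℝ)+1),
        mul_nonneg (mul_nonneg (by linarith : (0:ℝ) ≤ (l:ℝ)-1) (by linarith : (0:ℝ) ≤ (d:ℝ))) hXpos.le,
        mul_le_mul_of_nonneg_left hX (by nlinarith : (0:ℝ) ≤ 12*(d:ℝ)^2 - 4*(d:ℝ) + 2)]
  · rw [hρ]
    push_cast
    rw [pow_one]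
    ring_nf
  · rw [hρ]
    push_cast
    rw [pow_one, div_lt_iff₀ (by nlinarith : (0:ℝ) < (d:ℝ)*((d:ℝ)+1))]
    nlinarith
end

section
/- Hamming distance correctness of the tree-search branching step: let s, ŝ, t be strings of length n over an alphabet Σ with d_H(ŝ, t) ≤ d and d_H(s, t) > d. Let P be the set of positions p with s[p] ≠ t[p], and let P' ⊆ P be any subset of size d+1. Then there exists a position p ∈ P' with ŝ[p] = t[p], and for such a p, the string s' obtained from s by setting s'[p] = t[p] satisfies d_H(s', ŝ) = d_H(s, ŝ) − 1. -/
/-- Correctness of the tree-search branching step: if `d_H(ŝ, t) ≤ d` and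
`d_H(s, t) > d`, then among any `d+1` positions where `s` and `t` disagree
there is one where `ŝ` agrees with `t`, and substituting `t`'s character at
such a position brings `s` strictly closer to `ŝ`. -/
theorem stmt_8 {A : Type*} [Fintype A] [DecidableEq A] (n d : ℕ)
    (s shat t : Fin n → A)
    (h1 : hammingDist shat t ≤ d) (h2 : d < hammingDist s t)
    (P' : Finset (Fin n)) (hP' : ∀ p ∈ P', s p ≠ t p) (hcard : P'.card = d + 1) :
    ∃ p ∈ P', shat p = t p ∧
      hammingDist (Function.update s p (t p)) shat + 1 = hammingDist s shat := by
  -- find p ∈ P' with shat p = t p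
  obtain ⟨p, hpP, hpeq⟩ : ∃ p ∈ P', shat p = t p := by
    by_contra h
    push_neg at h
    have hsub : P' ⊆ Finset.univ.filter (fun i => shat i ≠ t i) := fun q hq =>
      Finset.mem_filter.mpr ⟨Finset.mem_univ q, h q hq⟩
    have := Finset.card_le_card hsub
    rw [hcard] at this
    have : d + 1 ≤ hammingDist shat t := this
    omega
  refine ⟨p, hpP, hpeq, ?_⟩
  have hsp : s p ≠ shat p := by
    rw [hpeq]; exact hP' p hpP
  have hset : Finset.univ.filter (fun i => Function.update s p (t p) i ≠ shat i)
      = (Finset.univ.filter (fun i => s i ≠ shat i)).erase p := by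
    ext q
    simp only [Finset.mem_filter, Finset.mem_erase, Finset.mem_univ, true_and]
    by_cases hq : q = p
    · subst hq
      simp [Function.update_self, hpeq]
    · simp [Function.update_of_ne hq, hq]
  have hpmem : p ∈ Finset.univ.filter (fun i => s i ≠ shat i) := by
    simp [hsp]
  unfold hammingDist
  show (Finset.univ.filter (fun i => Function.update s p (t p) i ≠ shat i)).card + 1
      = (Finset.univ.filter (fun i => s i ≠ shat i)).card
  rw [hset, Finset.card_erase_of_mem hpmem]
  have := Finset.card_pos.mpr ⟨p, hpmem⟩
  omega
end
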